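/- For all x ≥ 0, W(-x, -1/2, 1) = erfc(x/2), where erfc is the complementary error function erfc(y) = (2/√π) ∫_y^∞ e^{-t²} dt. -/

import Mathlib

open Real

/-- The Wright function `W(z, α, β) = ∑_{n≥0} z^n / (n! Γ(αn + β))`
(with the convention `1/Γ = 0` at the poles of `Γ`). -/
noncomputable def wright (z α β : ℝ) : ℝ :=
  ∑' n : ℕ, z ^ n / ((Nat.factorial n : ℝ) * Real.Gamma (α * n + β))

/-- The Mainardi function `M_ν(z) = W(-z, -ν, 1-ν)`. -/
noncomputable def mainardi (ν z : ℝ) : ℝ :=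
  ∑' n : ℕ, (-z) ^ n / ((Nat.factorial n : ℝ) * Real.Gamma (-ν * n + 1 - ν))

/-- The Gauss error function `erf y = (2/√π) ∫₀^y e^{-t²} dt`. -/
noncomputable def erf (y : ℝ) : ℝ :=
  (2 / Real.sqrt π) * ∫ t in (0:ℝ)..y, Real.exp (-t ^ 2)

/-- The complementary error function `erfc y = (2/√π) ∫_y^∞ e^{-t²} dt`. -/
noncomputable def erfc (y : ℝ) : ℝ :=
  (2 / Real.sqrt π) * ∫ t in Set.Ioi y, Real.exp (-t ^ 2)

open MeasureTheory

lemma gamma_half_sub (k : ℕ) :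
    Real.Gamma (1/2 - k) * (2*k).factorial = (-4:ℝ)^k * k.factorial * Real.sqrt π := by
  induction k with
  | zero => simpa using Real.Gamma_one_half_eq
  | succ k ih =>
    have hs : (1/2 : ℝ) - (k+1:ℕ) ≠ 0 := by
      push_cast
      intro h
      nlinarith [Nat.cast_nonneg (α := ℝ) k]
    have h1 : Real.Gamma ((1/2 - (k+1:ℕ)) + 1) = (1/2 - (k+1:ℕ)) * Real.Gamma (1/2 - (k+1:ℕ)) :=
      Real.Gamma_add_one hs
    have h2 : (1/2 : ℝ) - (k+1:ℕ) + 1 = 1/2 - k := by push_cast; ring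
    rw [h2] at h1
    have hf : ((2*(k+1)).factorial : ℝ) = (2*k+1+1) * ((2*k+1) * (2*k).factorial) := by
      have : 2*(k+1) = (2*k+1)+1 := by ring
      rw [this, Nat.factorial_succ, Nat.factorial_succ]
      push_cast; ring
    rw [hf]
    rw [h1] at ih
    have hfk : ((k+1).factorial : ℝ) = (k+1) * k.factorial := by
      rw [Nat.factorial_succ]; push_cast; ring
    rw [hfk]
    push_cast at ih ⊢
    linear_combination (-(4*(k:ℝ)+4)) * ih

lemma hasSum_exp_neg_sq (t : ℝ) :
    HasSum (fun k : ℕ => (-1)^k * t^(2*k) / k.factorial) (Real.exp (-t^2)) := by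
  have h : HasSum (fun k : ℕ => (-t^2)^k / k.factorial) (Real.exp (-t^2)) := by
    rw [Real.exp_eq_exp_ℝ]
    exact NormedSpace.expSeries_div_hasSum_exp (-t^2)
  refine h.congr_fun fun k => ?_
  rw [pow_mul, ← mul_pow, neg_one_mul]

lemma hasSum_erf_integral {y : ℝ} (hy : 0 ≤ y) :
    HasSum (fun k : ℕ => (-1)^k * y^(2*k+1) / (k.factorial * (2*k+1)))
      (∫ t in Set.Ioc (0:ℝ) y, Real.exp (-t^2)) := by
  set F : ℕ → ℝ → ℝ := fun k t => (-1)^k * t^(2*k) / k.factorial with hF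
  have hcont : ∀ k, Continuous (F k) := by
    intro k; fun_prop
  have hint : ∀ k, Integrable (F k) (volume.restrict (Set.Ioc 0 y)) :=
    fun k => (hcont k).integrableOn_Ioc
  have hfac : ∀ k : ℕ, ((k.factorial : ℝ)) ≠ 0 :=
    fun k => Nat.cast_ne_zero.2 k.factorial_ne_zero
  have h2k : ∀ k : ℕ, (2*(k:ℝ)+1) ≠ 0 := fun k => by positivity
  have hval : ∀ k : ℕ, ∫ t in Set.Ioc (0:ℝ) y, F k t
      = (-1)^k * y^(2*k+1) / (k.factorial * (2*k+1)) := by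
    intro k
    rw [← intervalIntegral.integral_of_le hy]
    have : ∀ t : ℝ, F k t = ((-1)^k / k.factorial) * t^(2*k) := fun t => by
      simp only [hF]; ring
    simp_rw [this]
    rw [intervalIntegral.integral_const_mul, integral_pow]
    push_cast
    field_simp
    simp
  have hnormval : ∀ k : ℕ, ∫ t in Set.Ioc (0:ℝ) y, ‖F k t‖
      = y^(2*k+1) / (k.factorial * (2*k+1)) := by
    intro k
    have : ∀ t : ℝ, ‖F k t‖ = (1 / k.factorial) * t^(2*k) := fun t => by
      simp only [hF]
      rw [norm_div, norm_mul, norm_pow, norm_pow, norm_neg, norm_one, one_pow, one_mul]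
      rw [Real.norm_eq_abs t, Real.norm_eq_abs, pow_mul, sq_abs, ← pow_mul]
      rw [abs_of_nonneg (by positivity : (0:ℝ) ≤ (k.factorial:ℝ))]
      ring
    simp_rw [this]
    rw [← intervalIntegral.integral_of_le hy, intervalIntegral.integral_const_mul, integral_pow]
    push_cast
    field_simp
    simp
  have hsummable : Summable fun k : ℕ => ∫ t in Set.Ioc (0:ℝ) y, ‖F k t‖ := by
    have hg : Summable fun k : ℕ => y * ((y^2)^k / k.factorial) :=
      ((NormedSpace.expSeries_div_hasSum_exp (y^2)).summable).mul_left y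
    refine Summable.of_nonneg_of_le (fun k => ?_) (fun k => ?_) hg
    · rw [hnormval k]; positivity
    · rw [hnormval k]
      have hnum : y^(2*k+1) = y * (y^2)^k := by rw [pow_succ, pow_mul]; ring
      rw [hnum]
      calc y * (y^2)^k / (k.factorial * (2*k+1))
          ≤ y * (y^2)^k / (k.factorial * 1) := by
            gcongr
            linarith [Nat.cast_nonneg (α := ℝ) k]
        _ = y * ((y^2)^k / k.factorial) := by rw [mul_one, mul_div_assoc]
  have key := MeasureTheory.hasSum_integral_of_summable_integral_norm hint hsummable
  have heq : ∀ t : ℝ, (∑' k : ℕ, F k t) = Real.exp (-t^2) :=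
    fun t => (hasSum_exp_neg_sq t).tsum_eq
  simp_rw [heq] at key
  exact key.congr_fun fun k => (hval k).symm

/-- For all `x ≥ 0`, `W(-x, -1/2, 1) = erfc (x/2)`. -/
theorem wright_eq_erfc (x : ℝ) (hx : 0 ≤ x) :
    wright (-x) (-(1/2)) 1 = erfc (x / 2) := by
  have hy : (0:ℝ) ≤ x/2 := by linarith
  have hsqrt : Real.sqrt π ≠ 0 := ne_of_gt (Real.sqrt_pos.2 pi_pos)
  set I := ∫ t in Set.Ioc (0:ℝ) (x/2), Real.exp (-t^2) with hIdef
  have hserI := hasSum_erf_integral hy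
  -- integrability of the gaussian
  have hg : Integrable (fun t : ℝ => Real.exp (-t^2)) := by
    have := integrable_exp_neg_mul_sq (one_pos : (0:ℝ) < 1)
    simpa using this
  -- the erfc side
  have herfc : erfc (x/2) = 1 - (2/Real.sqrt π) * I := by
    have hunion : Set.Ioc (0:ℝ) (x/2) ∪ Set.Ioi (x/2) = Set.Ioi 0 :=
      Set.Ioc_union_Ioi_eq_Ioi hy
    have hdisj : Disjoint (Set.Ioc (0:ℝ) (x/2)) (Set.Ioi (x/2)) :=
      Set.Ioc_disjoint_Ioi le_rfl
    have hsplit : (∫ t in Set.Ioi (0:ℝ), Real.exp (-t^2))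
        = I + ∫ t in Set.Ioi (x/2), Real.exp (-t^2) := by
      rw [← hunion, setIntegral_union hdisj measurableSet_Ioi
        hg.integrableOn hg.integrableOn]
    have hgauss : (∫ t in Set.Ioi (0:ℝ), Real.exp (-t^2)) = Real.sqrt π / 2 := by
      have := integral_gaussian_Ioi 1
      simpa using this
    have : (∫ t in Set.Ioi (x/2), Real.exp (-t^2)) = Real.sqrt π / 2 - I := by
      rw [hgauss] at hsplit; linarith
    rw [erfc]
    rw [show (fun t : ℝ => Real.exp (-t ^ 2)) = fun t : ℝ => Real.exp (-t^2) from rfl] at this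
    rw [this]
    field_simp
  -- the wright side
  set f : ℕ → ℝ := fun n => (-x)^n / ((n.factorial : ℝ) * Real.Gamma (-(1/2) * n + 1)) with hfdef
  have ha_even : HasSum (fun k : ℕ => f (2*k)) 1 := by
    have : (fun k : ℕ => f (2*k)) = fun k : ℕ => if k = 0 then 1 else 0 := by
      funext k
      rcases Nat.eq_zero_or_pos k with rfl | hk
      · simp [hfdef, Real.Gamma_one]
      · have hk1 : 1 ≤ k := hk
        have harg : (-(1/2) : ℝ) * ((2*k : ℕ) : ℝ) + 1 = -((k-1 : ℕ) : ℝ) := by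
          push_cast [Nat.cast_sub hk1]
          ring
        simp only [hfdef, harg, Real.Gamma_neg_nat_eq_zero, mul_zero, div_zero]
        simp [Nat.pos_iff_ne_zero.1 hk]
    rw [this]
    exact hasSum_ite_eq 0 1
  have ha_odd : HasSum (fun k : ℕ => f (2*k+1)) (-(2/Real.sqrt π) * I) := by
    refine (hserI.mul_left (-(2/Real.sqrt π))).congr_fun fun k => ?_
    have hfac : ((k.factorial : ℝ)) ≠ 0 := Nat.cast_ne_zero.2 k.factorial_ne_zero
    have hfac2 : (((2*k).factorial : ℝ)) ≠ 0 := Nat.cast_ne_zero.2 (2*k).factorial_ne_zero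
    have h2k1 : ((2*k : ℕ) : ℝ) + 1 ≠ 0 := by positivity
    have harg : (-(1/2) : ℝ) * ((2*k+1 : ℕ) : ℝ) + 1 = 1/2 - k := by push_cast; ring
    have hG : Real.Gamma (1/2 - k) = (-4:ℝ)^k * k.factorial * Real.sqrt π / (2*k).factorial := by
      rw [eq_div_iff hfac2]
      exact gamma_half_sub k
    have hfs : (((2*k+1).factorial : ℝ)) = (2*k+1) * (2*k).factorial := by
      rw [Nat.factorial_succ]; push_cast; ring
    simp only [hfdef, harg, hG, hfs]
    have hxodd : (-x)^(2*k+1) = -(x^(2*k+1)) := Odd.neg_pow ⟨k, by ring⟩ x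
    have hhalf : (x/2)^(2*k+1) = x^(2*k+1) / (2 * 4^k) := by
      rw [div_pow]
      congr 1
      rw [pow_succ, pow_mul]
      norm_num
      ring
    rw [hxodd, hhalf]
    have h4 : ((-4:ℝ))^k = (-1)^k * 4^k := by rw [← neg_one_mul, mul_pow]
    rw [h4]
    rcases Nat.even_or_odd k with hk | hk
    · rw [hk.neg_one_pow]
      field_simp
    · rw [hk.neg_one_pow]
      field_simp
  have hsum : HasSum f (1 + -(2/Real.sqrt π) * I) := ha_even.even_add_odd ha_odd
  rw [wright]
  rw [show (∑' n : ℕ, (-x) ^ n / ((Nat.factorial n : ℝ) * Real.Gamma (-(1/2) * n + 1))) = ∑' n, f n from rfl]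
  rw [hsum.tsum_eq, herfc]
  ring
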